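/- For integers 0 ≤ k ≤ n/2, the number of subsets G = {s₁ < s₂ < … < s_j} of [n] with j ≤ k and s_i ≥ 2i for every 1 ≤ i ≤ j equals C(n, k). -/

import Mathlib

open Finset

/-- `D m n`: the subsets `{s₁ < s₂ < ⋯ < s_t}` of `{1,…,n}` with `t ≤ m` and
`s_i ≥ 2i` for all `1 ≤ i ≤ t` (indexing via the increasing enumeration). -/
def D (m n : ℕ) : Finset (Finset ℕ) :=
  (Finset.Icc 1 n).powerset.filter
    (fun G => G.card ≤ m ∧ ∀ i < G.card, 2 * (i + 1) ≤ (G.sort (· ≤ ·)).getD i 0)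

lemma sorted_filter_le (l : List ℕ) (h : l.Pairwise (· < ·)) (i : ℕ) (hi : i < l.length) :
    (l.filter (fun x => x ≤ l[i])).length = i + 1 := by
  have hmono : ∀ a b : ℕ, (ha : a < l.length) → (hb : b < l.length) → a < b → l[a] < l[b] := by
    intro a b ha hb hab
    exact h.rel_get_of_lt (a := ⟨a, ha⟩) (b := ⟨b, hb⟩) hab
  have hd : l.filter (fun x => x ≤ l[i]) =
      (l.take (i+1)).filter (fun x => x ≤ l[i]) ++ (l.drop (i+1)).filter (fun x => x ≤ l[i]) := by
    rw [← List.filter_append, List.take_append_drop]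
  have h1 : (l.take (i+1)).filter (fun x => x ≤ l[i]) = l.take (i+1) := by
    apply List.filter_eq_self.mpr
    intro a ha
    rw [List.mem_take_iff_getElem] at ha
    obtain ⟨j, hj, rfl⟩ := ha
    simp only [decide_eq_true_eq]
    have hjl : j < l.length := by
      simp only [lt_inf_iff] at hj; exact hj.2
    rcases Nat.lt_or_ge j i with hji | hji
    · exact le_of_lt (hmono j i hjl hi hji)
    · have : j = i := by
        simp only [lt_inf_iff] at hj; omega
      subst this; exact le_refl _
  have h2 : (l.drop (i+1)).filter (fun x => x ≤ l[i]) = [] := by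
    rw [List.filter_eq_nil_iff]
    intro a ha
    rw [List.mem_iff_getElem] at ha
    obtain ⟨j, hj, rfl⟩ := ha
    have hlen : i + 1 + j < l.length := by
      have := List.length_drop (i := i+1) (l := l); omega
    rw [List.getElem_drop]
    simp only [decide_eq_true_eq, not_le]
    exact hmono i (i+1+j) hi hlen (by omega)
  rw [hd, h1, h2, List.append_nil, List.length_take]
  omega

/-- The alternative characterization predicate. -/
def Q (G : Finset ℕ) : Prop := ∀ s ∈ G, 2 * (G.filter (· ≤ s)).card ≤ s

instance : DecidablePred Q := fun G => by unfold Q; infer_instance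

lemma card_filter_le_sort (G : Finset ℕ) (i : ℕ) (hi : i < (G.sort (· ≤ ·)).length) :
    (G.filter (· ≤ (G.sort (· ≤ ·))[i])).card = i + 1 := by
  set l := G.sort (· ≤ ·) with hl
  have hnd : (l.filter (· ≤ l[i])).Nodup := (G.sort_nodup _).filter _
  have htf : (l.filter (· ≤ l[i])).toFinset = G.filter (· ≤ l[i]) := by
    ext x
    simp only [List.mem_toFinset, List.mem_filter, Finset.mem_filter, decide_eq_true_eq, hl,
      Finset.mem_sort]
  rw [← htf, List.card_toFinset, hnd.dedup]
  exact sorted_filter_le l (G.sortedLT_sort.pairwise) i hi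

lemma cond_iff_Q (G : Finset ℕ) :
    (∀ i < G.card, 2 * (i + 1) ≤ (G.sort (· ≤ ·)).getD i 0) ↔ Q G := by
  set l := G.sort (· ≤ ·) with hl
  have hlen : l.length = G.card := G.length_sort _
  constructor
  · intro hc s hs
    have hs' : s ∈ l := (Finset.mem_sort _).mpr hs
    rw [List.mem_iff_getElem] at hs'
    obtain ⟨i, hi, rfl⟩ := hs'
    rw [card_filter_le_sort G i hi]
    have := hc i (by omega)
    rwa [List.getD_eq_getElem l 0 hi] at this
  · intro hq i hi
    have hi' : i < l.length := by omega
    rw [List.getD_eq_getElem l 0 hi']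
    have hmem : l[i] ∈ G := (Finset.mem_sort _).mp (l.getElem_mem hi')
    have := hq _ hmem
    rwa [card_filter_le_sort G i hi'] at this

/-- The reformulated family. -/
def A (k n : ℕ) : Finset (Finset ℕ) :=
  (Finset.Icc 1 n).powerset.filter (fun G => G.card ≤ k ∧ Q G)

lemma D_eq_A (k n : ℕ) : D k n = A k n := by
  unfold D A
  apply Finset.filter_congr
  intro G _
  rw [cond_iff_Q]

lemma Q_empty : Q (∅ : Finset ℕ) := by intro s hs; simp at hs

lemma card_le_of_Q {G : Finset ℕ} {n : ℕ} (hG : G ⊆ Finset.Icc 1 n) (hq : Q G) :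
    2 * G.card ≤ n := by
  rcases G.eq_empty_or_nonempty with rfl | hne
  · simp
  · have hmax := G.max'_mem hne
    have h1 := hq _ hmax
    have h2 : G.filter (· ≤ G.max' hne) = G := by
      apply Finset.filter_true_of_mem
      intro x hx; exact G.le_max' x hx
    rw [h2] at h1
    have := hG hmax
    rw [Finset.mem_Icc] at this
    omega

lemma A_zero (n : ℕ) : A 0 n = {∅} := by
  ext G
  simp only [A, Finset.mem_filter, Finset.mem_powerset, Finset.mem_singleton,
    Nat.le_zero, Finset.card_eq_zero]
  constructor
  · rintro ⟨_, h, _⟩; exact h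
  · rintro rfl; exact ⟨Finset.empty_subset _, rfl, Q_empty⟩

lemma A_n_zero (k : ℕ) : A k 0 = {∅} := by
  ext G
  simp only [A, Finset.mem_filter, Finset.mem_powerset, Finset.mem_singleton]
  constructor
  · rintro ⟨h, _, _⟩
    simpa using Finset.subset_empty.mp (by simpa using h)
  · rintro rfl; exact ⟨by simp, by simp, Q_empty⟩

lemma A_saturate {k n : ℕ} (h : n < 2 * (k + 1)) : A (k + 1) n = A k n := by
  unfold A
  apply Finset.filter_congr
  intro G hG
  rw [Finset.mem_powerset] at hG
  constructor
  · rintro ⟨_, hq⟩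
    have := card_le_of_Q hG hq
    exact ⟨by omega, hq⟩
  · rintro ⟨hc, hq⟩; exact ⟨by omega, hq⟩

lemma Q_insert {G : Finset ℕ} {n : ℕ} (hG : G ⊆ Finset.Icc 1 n) (hn : n + 1 ∉ G) :
    Q (insert (n+1) G) ↔ Q G ∧ 2 * (G.card + 1) ≤ n + 1 := by
  have hkey : ∀ s ∈ G, (insert (n+1) G).filter (· ≤ s) = G.filter (· ≤ s) := by
    intro s hs
    have hsn : s ≤ n := by have := hG hs; rw [Finset.mem_Icc] at this; omega
    rw [Finset.filter_insert]
    rw [if_neg (by omega)]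
  have hfull : (insert (n+1) G).filter (· ≤ n + 1) = insert (n+1) G := by
    apply Finset.filter_true_of_mem
    intro x hx
    rcases Finset.mem_insert.mp hx with rfl | hx
    · exact le_refl _
    · have := hG hx; rw [Finset.mem_Icc] at this; omega
  constructor
  · intro hq
    constructor
    · intro s hs
      have := hq s (Finset.mem_insert_of_mem hs)
      rwa [hkey s hs] at this
    · have := hq (n+1) (Finset.mem_insert_self _ _)
      rwa [hfull, Finset.card_insert_of_notMem hn] at this
  · rintro ⟨hq, hc⟩ s hs
    rcases Finset.mem_insert.mp hs with rfl | hs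
    · rw [hfull, Finset.card_insert_of_notMem hn]; exact hc
    · rw [hkey s hs]; exact hq s hs

lemma A_recurrence {k n : ℕ} (h : 2 * (k + 1) ≤ n + 1) :
    (A (k + 1) (n + 1)).card = (A (k + 1) n).card + (A k n).card := by
  have hsplit : A (k+1) (n+1) = A (k+1) n ∪ (A k n).image (insert (n+1)) := by
    ext G
    simp only [A, Finset.mem_union, Finset.mem_filter, Finset.mem_powerset, Finset.mem_image]
    constructor
    · rintro ⟨hsub, hc, hq⟩
      by_cases hmem : n + 1 ∈ G
      · right
        refine ⟨G.erase (n+1), ⟨?_, ?_, ?_⟩, ?_⟩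
        · intro x hx
          have hx1 := Finset.mem_of_mem_erase hx
          have hx2 := Finset.ne_of_mem_erase hx
          have := hsub hx1; rw [Finset.mem_Icc] at this ⊢; omega
        · have := Finset.card_erase_of_mem hmem
          omega
        · have herase : G.erase (n+1) ⊆ Finset.Icc 1 n := by
            intro x hx
            have hx1 := Finset.mem_of_mem_erase hx
            have hx2 := Finset.ne_of_mem_erase hx
            have := hsub hx1; rw [Finset.mem_Icc] at this ⊢; omega
          have hni : n + 1 ∉ G.erase (n+1) := Finset.notMem_erase _ _
          have hins : insert (n+1) (G.erase (n+1)) = G := Finset.insert_erase hmem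
          have := (Q_insert herase hni).mp (by rwa [hins])
          exact this.1
        · exact Finset.insert_erase hmem
      · left
        refine ⟨?_, hc, hq⟩
        intro x hx
        have := hsub hx; rw [Finset.mem_Icc] at this ⊢
        rcases Nat.lt_or_ge x (n+1) with h' | h'
        · omega
        · exfalso; have : x = n + 1 := by omega
          subst this; exact hmem hx
    · rintro (⟨hsub, hc, hq⟩ | ⟨G', ⟨hsub, hc, hq⟩, rfl⟩)
      · exact ⟨hsub.trans (Finset.Icc_subset_Icc_right (by omega)), hc, hq⟩
      · have hni : n + 1 ∉ G' := by
          intro hx; have := hsub hx; rw [Finset.mem_Icc] at this; omega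
        refine ⟨?_, ?_, ?_⟩
        · intro x hx
          rcases Finset.mem_insert.mp hx with rfl | hx
          · rw [Finset.mem_Icc]; omega
          · have := hsub hx; rw [Finset.mem_Icc] at this ⊢; omega
        · rw [Finset.card_insert_of_notMem hni]; omega
        · exact (Q_insert hsub hni).mpr ⟨hq, by omega⟩
  have hdisj : Disjoint (A (k+1) n) ((A k n).image (insert (n+1))) := by
    rw [Finset.disjoint_left]
    intro G hG1 hG2
    simp only [A, Finset.mem_filter, Finset.mem_powerset] at hG1
    simp only [Finset.mem_image] at hG2
    obtain ⟨G', _, rfl⟩ := hG2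
    have := hG1.1 (Finset.mem_insert_self (n+1) G')
    rw [Finset.mem_Icc] at this; omega
  have hinj : ((A k n).image (insert (n+1))).card = (A k n).card := by
    apply Finset.card_image_of_injOn
    intro G1 hG1 G2 hG2 heq
    simp only [Finset.mem_coe, A, Finset.mem_filter, Finset.mem_powerset] at hG1 hG2
    have h1 : n + 1 ∉ G1 := by
      intro hx; have := hG1.1 hx; rw [Finset.mem_Icc] at this; omega
    have h2 : n + 1 ∉ G2 := by
      intro hx; have := hG2.1 hx; rw [Finset.mem_Icc] at this; omega
    have := congrArg (fun S => Finset.erase S (n+1)) heq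
    simpa [Finset.erase_insert h1, Finset.erase_insert h2] using this
  rw [hsplit, Finset.card_union_of_disjoint hdisj, hinj]

lemma card_A : ∀ n k : ℕ, 2 * k ≤ n → (A k n).card = n.choose k := by
  intro n
  induction n with
  | zero =>
    intro k hk
    have : k = 0 := by omega
    subst this
    rw [A_n_zero]; simp
  | succ n ih =>
    intro k hk
    cases k with
    | zero => rw [A_zero]; simp
    | succ j =>
      have hstep : (A (j+1) n).card = n.choose (j+1) := by
        rcases Nat.lt_or_ge n (2 * (j+1)) with hlt | hge
        · have hn : n = 2 * j + 1 := by omega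
          rw [A_saturate hlt, ih j (by omega)]
          conv_lhs => rw [show j = n - (j+1) by omega]
          exact Nat.choose_symm (by omega)
        · exact ih (j+1) hge
      rw [A_recurrence hk, hstep, ih j (by omega), Nat.choose_succ_succ']
      omega

theorem card_D {k n : ℕ} (hk : 2 * k ≤ n) : (D k n).card = n.choose k := by
  rw [D_eq_A]
  exact card_A n k hk
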